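/- In the parallel execution of ARC and OPT, during the step in which OPT alone serves a request on which OPT faults, the change in the potential Φ = p − [(b₁'−t) + 2(t₁'−t) + 3(b₂'−t) + 4(t₂'−t)] satisfies ΔΦ ≤ 4N, because 0 ≤ b₁' + t₁' + b₂' + t₂' ≤ N implies that the quantity b₁' + 2t₁' + 3b₂' + 4t₂' can change by at most 4N, while p, t₁, t₂ are unchanged. -/

import Mathlib

abbrev Page := ℕ

/-- A valid offline demand-paging execution with cache size `N` on request
sequence `σ`, starting from the empty cache. `C i` is the cache just before
serving request `i` (so `C (i+1)` is the cache just after serving it).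
Demand paging: on a hit the cache is unchanged; on a fault only the requested
page may be brought in. -/
def OptExec (N : ℕ) (σ : List Page) (C : ℕ → Finset Page) : Prop :=
  C 0 = ∅ ∧
  (∀ i, (C i).card ≤ N) ∧
  ∀ i, i < σ.length →
    σ.getD i 0 ∈ C (i + 1) ∧
    C (i + 1) ⊆ C i ∪ {σ.getD i 0} ∧
    (σ.getD i 0 ∈ C i → C (i + 1) = C i)

/-- Number of page faults incurred by an offline execution `C` on `σ`. -/
def optFaults (σ : List Page) (C : ℕ → Finset Page) : ℕ :=
  ((List.range σ.length).filter (fun i => decide (σ.getD i 0 ∉ C i))).length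

/-- The fault count of an optimal offline demand-paging algorithm (OPT)
with cache size `N` on `σ`. -/
noncomputable def optCost (N : ℕ) (σ : List Page) : ℕ :=
  sInf {k | ∃ C, OptExec N σ C ∧ optFaults σ C = k}

/-- The state of the ARC cache: main lists `T1`, `T2` and history lists
`B1`, `B2` (each kept in recency order, MRU at the head, LRU at the end),
together with the adaptive parameter `p`. -/
structure ArcState where
  T1 : List Page
  T2 : List Page
  B1 : List Page
  B2 : List Page
  p  : ℕ

/-- ARC starts with empty lists and `p = 0`. -/
def ArcState.init : ArcState := ⟨[], [], [], [], 0⟩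

/-- ARC's subroutine REPLACE: demote `LRU(T1)` to the MRU position of `B1`
if `|T1| ≥ 1` and either (the requested page was in `B2` and `|T1| = p`) or
`|T1| > p`; otherwise demote `LRU(T2)` to the MRU position of `B2`. -/
def arcReplace (xInB2 : Bool) (s : ArcState) : ArcState :=
  if 1 ≤ s.T1.length ∧ ((xInB2 = true ∧ s.T1.length = s.p) ∨ s.p < s.T1.length) then
    { s with T1 := s.T1.dropLast, B1 := s.T1.getLast?.toList ++ s.B1 }
  else
    { s with T2 := s.T2.dropLast, B2 := s.T2.getLast?.toList ++ s.B2 }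

/-- One step of ARC (cache size `N`, with the ±1 adaptation rule) on a
requested page `x`. -/
def arcStep (N : ℕ) (s : ArcState) (x : Page) : ArcState :=
  if x ∈ s.T1 ∨ x ∈ s.T2 then
    -- cache hit: move `x` to the MRU position of `T2`
    { s with T1 := s.T1.erase x, T2 := x :: s.T2.erase x }
  else if x ∈ s.B1 then
    -- history hit in B1: adapt `p := min (p+1) N`, REPLACE, move `x` to MRU(T2)
    let s2 := arcReplace false { s with p := min (s.p + 1) N }
    { s2 with B1 := s2.B1.erase x, T2 := x :: s2.T2 }
  else if x ∈ s.B2 then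
    -- history hit in B2: adapt `p := max (p-1) 0`, REPLACE, move `x` to MRU(T2)
    let s2 := arcReplace true { s with p := s.p - 1 }
    { s2 with B2 := s2.B2.erase x, T2 := x :: s2.T2 }
  else
    -- cache and directory miss
    let s2 :=
      if s.T1.length + s.B1.length = N then
        if s.T1.length < N then
          arcReplace false { s with B1 := s.B1.dropLast }
        else
          { s with T1 := s.T1.dropLast }
      else if s.T1.length + s.B1.length < N ∧
          N ≤ s.T1.length + s.T2.length + s.B1.length + s.B2.length then
        arcReplace false
          (if s.T1.length + s.T2.length + s.B1.length + s.B2.length = 2 * N then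
            { s with B2 := s.B2.dropLast }
          else s)
      else s
    { s2 with T1 := x :: s2.T1 }

/-- Run ARC on a request sequence. -/
def arcRun (N : ℕ) : ArcState → List Page → ArcState
  | s, [] => s
  | s, x :: xs => arcRun N (arcStep N s x) xs

/-- Number of page faults incurred by ARC on a request sequence. -/
def arcCost (N : ℕ) : ArcState → List Page → ℕ
  | _, [] => 0
  | s, x :: xs => (if x ∈ s.T1 ∨ x ∈ s.T2 then 0 else 1) + arcCost N (arcStep N s x) xs

/-- `t = t₁ + t₂`, the number of pages in ARC's cache. -/
def arcT (s : ArcState) : ℕ := s.T1.length + s.T2.length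

/-- `TOP(X)` for a recency-ordered list `X`: the longest prefix (i.e. the
largest set of most-recently-used pages) of `X` all of whose pages are in
OPT's cache `O`; `topLen` is its size. -/
def topLen (X : List Page) (O : Finset Page) : ℕ :=
  (X.takeWhile (fun q => decide (q ∈ O))).length

/-- `t₁' = |TOP(T1)|`. -/
def arcT1' (s : ArcState) (O : Finset Page) : ℕ := topLen s.T1 O

/-- `t₂' = |TOP(T2)|`. -/
def arcT2' (s : ArcState) (O : Finset Page) : ℕ := topLen s.T2 O

/-- `b₁' = |TOP(L1) ∩ B1|` where `L1 = T1 · B1`. -/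
def arcB1' (s : ArcState) (O : Finset Page) : ℕ :=
  (((s.T1 ++ s.B1).takeWhile (fun q => decide (q ∈ O))).filter
    (fun q => decide (q ∈ s.B1))).length

/-- `b₂' = |TOP(L2) ∩ B2|` where `L2 = T2 · B2`. -/
def arcB2' (s : ArcState) (O : Finset Page) : ℕ :=
  (((s.T2 ++ s.B2).takeWhile (fun q => decide (q ∈ O))).filter
    (fun q => decide (q ∈ s.B2))).length

/-- The potential `Φ = p − [(b₁'−t) + 2(t₁'−t) + 3(b₂'−t) + 4(t₂'−t)]`
with the value `t` supplied explicitly. -/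
def arcPhiAt (s : ArcState) (O : Finset Page) (t : ℤ) : ℤ :=
  (s.p : ℤ) - (((arcB1' s O : ℤ) - t) + 2 * ((arcT1' s O : ℤ) - t)
    + 3 * ((arcB2' s O : ℤ) - t) + 4 * ((arcT2' s O : ℤ) - t))

/-- The potential `Φ = p − [(b₁'−t) + 2(t₁'−t) + 3(b₂'−t) + 4(t₂'−t)]`. -/
def arcPhi (s : ArcState) (O : Finset Page) : ℤ :=
  arcPhiAt s O (arcT s)

/-- ARC's cache directory: all pages it tracks. -/
def arcDir (s : ArcState) : List Page := s.T1 ++ s.T2 ++ s.B1 ++ s.B2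

/-- The directory as a multiset. -/
def dirM (s : ArcState) : Multiset Page := ↑s.T1 + ↑s.T2 + ↑s.B1 + ↑s.B2

lemma dirM_eq (s : ArcState) : (↑(arcDir s) : Multiset Page) = dirM s := by
  simp [arcDir, dirM]

lemma nodup_dir_iff (s : ArcState) : (arcDir s).Nodup ↔ (dirM s).Nodup := by
  rw [← Multiset.coe_nodup, dirM_eq]

lemma dropLast_getLast? (l : List Page) : l.dropLast ++ l.getLast?.toList = l := by
  rcases l.eq_nil_or_concat with rfl | ⟨l', a, rfl⟩ <;> simp

lemma dirM_replace (b : Bool) (s : ArcState) : dirM (arcReplace b s) = dirM s := by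
  unfold arcReplace
  split
  · have h : (↑s.T1.dropLast : Multiset Page) + ↑s.T1.getLast?.toList = ↑s.T1 := by
      rw [Multiset.coe_add, dropLast_getLast?]
    simp only [dirM, ← Multiset.coe_add]
    rw [← h]; abel
  · have h : (↑s.T2.dropLast : Multiset Page) + ↑s.T2.getLast?.toList = ↑s.T2 := by
      rw [Multiset.coe_add, dropLast_getLast?]
    simp only [dirM, ← Multiset.coe_add]
    rw [← h]; abel

lemma mem_B1_replace {x : Page} {b : Bool} {s : ArcState} (h : x ∈ s.B1) :
    x ∈ (arcReplace b s).B1 := by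
  unfold arcReplace; split <;> simp [h]

lemma mem_B2_replace {x : Page} {b : Bool} {s : ArcState} (h : x ∈ s.B2) :
    x ∈ (arcReplace b s).B2 := by
  unfold arcReplace; split <;> simp [h]

lemma cons_erase_add (A B : Multiset Page) (x : Page) (hx : x ∈ A) :
    A.erase x + (x ::ₘ B) = A + B := by
  conv_rhs => rw [← Multiset.cons_erase hx]
  rw [Multiset.add_cons, Multiset.cons_add]

lemma shuffle3 (A T E C : Multiset Page) (x : Page) (hx : x ∈ E) :
    A + (x ::ₘ T) + E.erase x + C = A + T + E + C := by
  conv_rhs => rw [← Multiset.cons_erase hx]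
  simp only [Multiset.add_cons, Multiset.cons_add]

lemma shuffle4 (A T B E : Multiset Page) (x : Page) (hx : x ∈ E) :
    A + (x ::ₘ T) + B + E.erase x = A + T + B + E := by
  conv_rhs => rw [← Multiset.cons_erase hx]
  simp only [Multiset.add_cons, Multiset.cons_add]

lemma coe_dropLast_le (l : List Page) : (↑l.dropLast : Multiset Page) ≤ ↑l :=
  Multiset.coe_le.mpr l.dropLast_sublist.subperm

lemma dir_parts {s : ArcState} (h : (arcDir s).Nodup) :
    s.T1.Nodup ∧ s.T2.Nodup ∧ s.B1.Nodup ∧ s.B2.Nodup ∧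
    (∀ a ∈ s.T1, a ∉ s.T2) ∧ (∀ a ∈ s.T1, a ∉ s.B1) ∧ (∀ a ∈ s.T1, a ∉ s.B2) ∧
    (∀ a ∈ s.T2, a ∉ s.B1) ∧ (∀ a ∈ s.T2, a ∉ s.B2) ∧ (∀ a ∈ s.B1, a ∉ s.B2) := by
  simp only [arcDir, List.nodup_append', List.disjoint_append_left,
    List.disjoint_append_right] at h
  obtain ⟨⟨⟨hT1, hT2, d12⟩, hB1, d1b1, d2b1⟩, hB2, ⟨d1b2, d2b2⟩, db12⟩ := h
  exact ⟨hT1, hT2, hB1, hB2, fun a ha hb => d12 ha hb, fun a ha hb => d1b1 ha hb,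
    fun a ha hb => d1b2 ha hb, fun a ha hb => d2b1 ha hb, fun a ha hb => d2b2 ha hb,
    fun a ha hb => db12 ha hb⟩

lemma nodup_arcStep (N : ℕ) (x : Page) {s : ArcState} (h : (arcDir s).Nodup) :
    (arcDir (arcStep N s x)).Nodup := by
  have hparts := h
  rw [nodup_dir_iff] at h ⊢
  simp only [arcStep]
  by_cases h1 : x ∈ s.T1 ∨ x ∈ s.T2
  · rw [if_pos h1]
    have heq : dirM { s with T1 := s.T1.erase x, T2 := x :: s.T2.erase x } = dirM s := by
      simp only [dirM, ← Multiset.coe_erase, ← Multiset.cons_coe]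
      have hdisj : ∀ a ∈ s.T1, a ∉ s.T2 := by
        have hp := dir_parts hparts
        exact fun a ha => hp.2.2.2.2.1 a ha
      rcases h1 with hx | hx
      · rw [show (↑s.T2 : Multiset Page).erase x = ↑s.T2 from
          Multiset.erase_of_notMem (by simpa using hdisj x hx)]
        rw [cons_erase_add _ _ x (by simpa using hx)]
      · by_cases hx1 : x ∈ s.T1
        · exact absurd hx (hdisj x hx1)
        rw [show (↑s.T1 : Multiset Page).erase x = ↑s.T1 from
          Multiset.erase_of_notMem (by simpa using hx1),
          Multiset.cons_erase (show x ∈ (↑s.T2 : Multiset Page) from by simpa using hx)]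
    rw [heq]; exact h
  · rw [if_neg h1]
    by_cases h2 : x ∈ s.B1
    · rw [if_pos h2]
      set s2 := arcReplace false { s with p := min (s.p + 1) N } with hs2
      have hx2 : x ∈ s2.B1 := mem_B1_replace h2
      have heq : dirM { s2 with B1 := s2.B1.erase x, T2 := x :: s2.T2 } = dirM s2 := by
        simp only [dirM, ← Multiset.coe_erase, ← Multiset.cons_coe]
        exact shuffle3 _ _ _ _ x (by simpa using hx2)
      have hds2 : dirM s2 = dirM s := by rw [hs2, dirM_replace]; simp [dirM]
      rw [heq, hds2]; exact h
    · rw [if_neg h2]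
      by_cases h3 : x ∈ s.B2
      · rw [if_pos h3]
        set s2 := arcReplace true { s with p := s.p - 1 } with hs2
        have hx2 : x ∈ s2.B2 := mem_B2_replace h3
        have heq : dirM { s2 with B2 := s2.B2.erase x, T2 := x :: s2.T2 } = dirM s2 := by
          simp only [dirM, ← Multiset.coe_erase, ← Multiset.cons_coe]
          exact shuffle4 _ _ _ _ x (by simpa using hx2)
        have hds2 : dirM s2 = dirM s := by rw [hs2, dirM_replace]; simp [dirM]
        rw [heq, hds2]; exact h
      · rw [if_neg h3]
        have hxdir : x ∉ dirM s := by
          simp only [dirM, Multiset.mem_add, Multiset.mem_coe]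
          push_neg at h1 ⊢
          exact ⟨⟨⟨h1.1, h1.2⟩, h2⟩, h3⟩
        set s2 := (if s.T1.length + s.B1.length = N then
            if s.T1.length < N then
              arcReplace false { s with B1 := s.B1.dropLast }
            else
              { s with T1 := s.T1.dropLast }
          else if s.T1.length + s.B1.length < N ∧
              N ≤ s.T1.length + s.T2.length + s.B1.length + s.B2.length then
            arcReplace false
              (if s.T1.length + s.T2.length + s.B1.length + s.B2.length = 2 * N then
                { s with B2 := s.B2.dropLast }
              else s)
          else s) with hs2
        have hle : dirM s2 ≤ dirM s := by
          rw [hs2]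
          split
          · split
            · rw [dirM_replace]
              simp only [dirM]
              gcongr <;> first | exact le_refl _ | exact coe_dropLast_le _
            · simp only [dirM]
              gcongr <;> first | exact le_refl _ | exact coe_dropLast_le _
          · split
            · rw [dirM_replace]
              split
              · simp only [dirM]
                gcongr <;> first | exact le_refl _ | exact coe_dropLast_le _
              · exact le_refl _
            · exact le_refl _
        have : dirM { s2 with T1 := x :: s2.T1 } = x ::ₘ dirM s2 := by
          simp only [dirM, ← Multiset.cons_coe]
          simp only [Multiset.cons_add]
        rw [this, Multiset.nodup_cons]
        exact ⟨fun hm => hxdir (Multiset.mem_of_le hle hm), Multiset.nodup_of_le hle h⟩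

lemma nodup_arcRun (N : ℕ) : ∀ (l : List Page) (s : ArcState),
    (arcDir s).Nodup → (arcDir (arcRun N s l)).Nodup
  | [], _, h => h
  | x :: xs, s, h => nodup_arcRun N xs _ (nodup_arcStep N x h)

lemma sum_tops_le (s : ArcState) (O : Finset Page) (hd : (arcDir s).Nodup) :
    arcB1' s O + arcT1' s O + arcB2' s O + arcT2' s O ≤ O.card := by
  classical
  obtain ⟨hT1, hT2, hB1, hB2, d12, d1b1, d1b2, d2b1, d2b2, db12⟩ := dir_parts hd
  set P1 := s.T1.takeWhile (fun q => decide (q ∈ O)) with hP1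
  set Q1 := ((s.T1 ++ s.B1).takeWhile (fun q => decide (q ∈ O))).filter
      (fun q => decide (q ∈ s.B1)) with hQ1
  set P2 := s.T2.takeWhile (fun q => decide (q ∈ O)) with hP2
  set Q2 := ((s.T2 ++ s.B2).takeWhile (fun q => decide (q ∈ O))).filter
      (fun q => decide (q ∈ s.B2)) with hQ2
  have mP1 : ∀ a ∈ P1, a ∈ s.T1 ∧ a ∈ O := fun a ha =>
    ⟨(List.takeWhile_sublist _).subset ha, by simpa using List.mem_takeWhile_imp ha⟩
  have mP2 : ∀ a ∈ P2, a ∈ s.T2 ∧ a ∈ O := fun a ha =>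
    ⟨(List.takeWhile_sublist _).subset ha, by simpa using List.mem_takeWhile_imp ha⟩
  have mQ1 : ∀ a ∈ Q1, a ∈ s.B1 ∧ a ∈ O := by
    intro a ha
    have h1 := List.mem_of_mem_filter ha
    refine ⟨by simpa using List.of_mem_filter ha, ?_⟩
    simpa using List.mem_takeWhile_imp h1
  have mQ2 : ∀ a ∈ Q2, a ∈ s.B2 ∧ a ∈ O := by
    intro a ha
    have h1 := List.mem_of_mem_filter ha
    refine ⟨by simpa using List.of_mem_filter ha, ?_⟩
    simpa using List.mem_takeWhile_imp h1
  have nP1 : P1.Nodup := (List.takeWhile_sublist _).nodup hT1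
  have nP2 : P2.Nodup := (List.takeWhile_sublist _).nodup hT2
  have n11 : (s.T1 ++ s.B1).Nodup := List.nodup_append'.mpr ⟨hT1, hB1, fun a ha hb => d1b1 a ha hb⟩
  have n22 : (s.T2 ++ s.B2).Nodup := List.nodup_append'.mpr ⟨hT2, hB2, fun a ha hb => d2b2 a ha hb⟩
  have nQ1 : Q1.Nodup := ((List.filter_sublist).trans (List.takeWhile_sublist _)).nodup n11
  have nQ2 : Q2.Nodup := ((List.filter_sublist).trans (List.takeWhile_sublist _)).nodup n22
  set L := P1 ++ Q1 ++ P2 ++ Q2 with hL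
  have nL : L.Nodup := by
    rw [hL]
    simp only [List.nodup_append', List.disjoint_append_left, List.disjoint_append_right]
    refine ⟨⟨⟨nP1, nQ1, ?_⟩, nP2, ?_, ?_⟩, nQ2, ⟨?_, ?_⟩, ?_⟩
    · intro a ha hb; exact d1b1 a (mP1 a ha).1 (mQ1 a hb).1
    · intro a ha hb; exact d12 a (mP1 a ha).1 (mP2 a hb).1
    · intro a ha hb; exact d2b1 a (mP2 a hb).1 (mQ1 a ha).1
    · intro a ha hb; exact d1b2 a (mP1 a ha).1 (mQ2 a hb).1
    · intro a ha hb; exact db12 a (mQ1 a ha).1 (mQ2 a hb).1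
    · intro a ha hb; exact d2b2 a (mP2 a ha).1 (mQ2 a hb).1
  have subL : ∀ a ∈ L, a ∈ O := by
    intro a ha
    rw [hL] at ha
    simp only [List.mem_append] at ha
    rcases ha with ((h | h) | h) | h
    exacts [(mP1 a h).2, (mQ1 a h).2, (mP2 a h).2, (mQ2 a h).2]
  have hlenle : L.length ≤ O.card := by
    have hc : L.toFinset.card = L.length := List.toFinset_card_of_nodup nL
    have hsub : L.toFinset ⊆ O := fun a ha => subL a (List.mem_toFinset.mp ha)
    have := Finset.card_le_card hsub
    omega
  have hlen : L.length = arcT1' s O + arcB1' s O + arcT2' s O + arcB2' s O := by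
    rw [hL]
    simp [arcT1', arcB1', arcT2', arcB2', topLen, ← hP1, ← hQ1, ← hP2, ← hQ2]
    omega
  omega

/-- In the parallel execution of ARC and OPT, during the
step in which OPT alone serves a request on which it faults (ARC's state `s`
being unchanged), `0 ≤ b₁' + t₁' + b₂' + t₂' ≤ N` holds before and after, and
the change of the potential `Φ = p − [(b₁'−t) + 2(t₁'−t) + 3(b₂'−t) + 4(t₂'−t)]`
satisfies `ΔΦ ≤ 4N` (since `b₁' + 2t₁' + 3b₂' + 4t₂'` can change by at most
`4N`, while `p`, `t₁`, `t₂` are unchanged). -/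
theorem arc_opt_step_potential (N : ℕ) (σ : List Page) (C : ℕ → Finset Page)
    (hC : OptExec N σ C) (hCopt : optFaults σ C = optCost N σ)
    (j : ℕ) (hj : j < σ.length)
    (s : ArcState) (hs : s = arcRun N ArcState.init (σ.take j))
    (hfault : σ.getD j 0 ∉ C j) :
    arcB1' s (C j) + arcT1' s (C j) + arcB2' s (C j) + arcT2' s (C j) ≤ N ∧
    arcB1' s (C (j + 1)) + arcT1' s (C (j + 1))
        + arcB2' s (C (j + 1)) + arcT2' s (C (j + 1)) ≤ N ∧
    arcPhi s (C (j + 1)) - arcPhi s (C j) ≤ 4 * N := by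
  have hnd : (arcDir s).Nodup := by
    rw [hs]
    exact nodup_arcRun N _ _ (by simp [arcDir, ArcState.init])
  obtain ⟨-, hcard, -⟩ := hC
  have h1 := (sum_tops_le s (C j) hnd).trans (hcard j)
  have h2 := (sum_tops_le s (C (j + 1)) hnd).trans (hcard (j + 1))
  refine ⟨h1, h2, ?_⟩
  unfold arcPhi arcPhiAt
  omega
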